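/- Let K ≥ 2 be an integer and 0 < δ < 1. Let Λ̂ be a K×K real matrix with nonnegative entries each of whose columns sums to one, let A be a K×K real matrix such that each column a_{·k} of A satisfies min_{k'} ‖a_{·k} − e_{k'}‖₂ ≤ δ/K, and set Λ = A·Λ̂. Suppose that for every row index j ∈ {1,…,K} there exists a column index m with Λ[j,m] ≥ δ. Then there exists a bijection π of {1,…,K} such that for every k: ‖a_{·k} − e_{π(k)}‖₂ ≤ δ/K, and moreover π(k) is the unique index k' minimizing ‖a_{·k} − e_{k'}‖₂. -/
import Mathlib


open Matrix Finset

/-- The Euclidean norm of a real vector. -/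
noncomputable def euclNorm {n : Type*} [Fintype n] (v : n → ℝ) : ℝ :=
  Real.sqrt (∑ i, (v i) ^ 2)

lemma euclNorm_eq {n : Type*} [Fintype n] (v : n → ℝ) :
    euclNorm v = ‖(WithLp.equiv 2 (n → ℝ)).symm v‖ := by
  rw [EuclideanSpace.norm_eq]
  simp [euclNorm, sq_abs]

lemma euclNorm_nonneg {n : Type*} [Fintype n] (v : n → ℝ) : 0 ≤ euclNorm v :=
  Real.sqrt_nonneg _

lemma abs_le_euclNorm {n : Type*} [Fintype n] (v : n → ℝ) (i : n) :
    |v i| ≤ euclNorm v := by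
  have h : (v i) ^ 2 ≤ ∑ j, (v j) ^ 2 :=
    Finset.single_le_sum (f := fun j => (v j) ^ 2) (fun j _ => sq_nonneg _) (mem_univ i)
  calc |v i| = Real.sqrt ((v i) ^ 2) := (Real.sqrt_sq_eq_abs _).symm
    _ ≤ _ := Real.sqrt_le_sqrt h

lemma euclNorm_sub_le {n : Type*} [Fintype n] (u v : n → ℝ) :
    euclNorm (u - v) ≤ euclNorm u + euclNorm v := by
  simp only [euclNorm_eq]
  exact norm_sub_le ((WithLp.equiv 2 (n → ℝ)).symm u) ((WithLp.equiv 2 (n → ℝ)).symm v)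

/-- when every column of the recombination matrix `A` is within `δ/K`
of some elementary vector and every row of `Λ = A·Λ̂` contains an entry at least `δ`,
the nearest-elementary-vector assignment is a well-defined permutation. -/
theorem nearest_elementary_vector_is_permutation
    (K : ℕ) (hK : 2 ≤ K) (δ : ℝ) (hδ0 : 0 < δ) (hδ1 : δ < 1)
    (Λhat A : Matrix (Fin K) (Fin K) ℝ)
    (hΛhat_nonneg : ∀ i j, 0 ≤ Λhat i j) (hΛhat_sum : ∀ j, ∑ i, Λhat i j = 1)
    (hA : ∀ k : Fin K, ∃ k' : Fin K,
      euclNorm (fun i => A i k - if i = k' then 1 else 0) ≤ δ / K)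
    (hrow : ∀ j : Fin K, ∃ m : Fin K, δ ≤ (A * Λhat) j m) :
    ∃ π : Equiv.Perm (Fin K), ∀ k : Fin K,
      euclNorm (fun i => A i k - if i = π k then 1 else 0) ≤ δ / K ∧
      ∀ k' : Fin K, k' ≠ π k →
        euclNorm (fun i => A i k - if i = π k then 1 else 0)
          < euclNorm (fun i => A i k - if i = k' then 1 else 0) := by
  have hKpos : (0:ℝ) < K := by positivity
  have hK1 : (1:ℝ) < K := by exact_mod_cast lt_of_lt_of_le one_lt_two (by exact_mod_cast hK)
  have hδK : δ / K < δ := div_lt_self hδ0 hK1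
  choose σ hσ using hA
  -- σ is surjective
  have hsurj : Function.Surjective σ := by
    intro j
    by_contra hj
    push_neg at hj
    obtain ⟨m, hm⟩ := hrow j
    have hbound : ∀ i : Fin K, A j i ≤ δ / K := by
      intro i
      have h1 := abs_le_euclNorm (fun i' => A i' i - if i' = σ i then 1 else 0) j
      have hne : j ≠ σ i := fun h => hj i h.symm
      simp only [if_neg hne, sub_zero] at h1
      exact (abs_le.mp (h1.trans (hσ i))).2
    have hle : (A * Λhat) j m ≤ δ / K := by
      rw [Matrix.mul_apply]
      calc ∑ i, A j i * Λhat i m ≤ ∑ i, (δ / K) * Λhat i m := by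
            refine Finset.sum_le_sum fun i _ => ?_
            exact mul_le_mul_of_nonneg_right (hbound i) (hΛhat_nonneg i m)
        _ = (δ / K) * ∑ i, Λhat i m := by rw [Finset.mul_sum]
        _ = δ / K := by rw [hΛhat_sum m, mul_one]
    linarith
  have hbij : Function.Bijective σ := Finite.surjective_iff_bijective.mp hsurj
  refine ⟨Equiv.ofBijective σ hbij, fun k => ?_⟩
  have hπk : (Equiv.ofBijective σ hbij) k = σ k := rfl
  rw [hπk]
  refine ⟨hσ k, fun k' hk' => ?_⟩
  -- distance between distinct elementary vectors is √2
  set u : Fin K → ℝ := fun i => A i k - if i = σ k then 1 else 0 with hu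
  set w : Fin K → ℝ := fun i => A i k - if i = k' then 1 else 0 with hw
  have hdiff : euclNorm (u - w) = Real.sqrt 2 := by
    unfold euclNorm
    congr 1
    have : ∀ i : Fin K, ((u - w) i) ^ 2
        = (if i = k' then (1:ℝ) else 0) + (if i = σ k then 1 else 0) := by
      intro i
      by_cases h1 : i = k' <;> by_cases h2 : i = σ k
      · exact absurd (h1 ▸ h2) hk'
      · simp [hu, hw, Pi.sub_apply, h1, h2, hk']
      · simp [hu, hw, Pi.sub_apply, h1, h2, Ne.symm hk']
      · simp [hu, hw, Pi.sub_apply, h1, h2]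
    rw [Finset.sum_congr rfl (fun i _ => this i), Finset.sum_add_distrib]
    norm_num
  have htri : Real.sqrt 2 ≤ euclNorm u + euclNorm w := hdiff ▸ euclNorm_sub_le u w
  have hsqrt2 : (1:ℝ) < Real.sqrt 2 := by
    rw [show (1:ℝ) = Real.sqrt 1 by simp]
    exact Real.sqrt_lt_sqrt (by norm_num) (by norm_num)
  have h2δK : 2 * (δ / K) < Real.sqrt 2 := by
    have hK2 : (2:ℝ) ≤ K := by exact_mod_cast hK
    have hle : δ / K ≤ δ / 2 := by gcongr
    linarith
  have h1 : euclNorm u ≤ δ / K := hσ k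
  linarith
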